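/- Define w₂(v,m) = √((m² + v²)³) + v³ − 3vm² on the set {(v,m) : v ∈ ℝ, m > 0}. Then w₂ is differentiable there and satisfies the first-order PDE (−v + √(m² + v²)) ∂_v w₂(v,m) + m ∂_m w₂(v,m) = 0 for all v ∈ ℝ, m > 0; equivalently, ∇w₂(v,m) is orthogonal to r₁(v,m) = (−v + √(v²+m²), m), so w₂ is a Riemann invariant of the system of conservation laws with flux F(v,m) = (v²/2 − m²/2, −vm). -/

import Mathlib

/-- `w₂(v,m) = √((m²+v²)³) + v³ − 3vm²` is differentiable on
`{(v,m) : m > 0}` and satisfies `(−v + √(m²+v²)) ∂_v w₂ + m ∂_m w₂ = 0` there;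
equivalently `∇w₂ ⊥ r₁ = (−v+√(v²+m²), m)`, so `w₂` is a Riemann invariant of the
system of conservation laws with flux `F(v,m) = (v²/2 − m²/2, −vm)`. -/
theorem riemann_invariant_w2 :
    let w₂ : ℝ → ℝ → ℝ := fun v m =>
      Real.sqrt ((m ^ 2 + v ^ 2) ^ 3) + v ^ 3 - 3 * v * m ^ 2
    ∀ v m : ℝ, 0 < m →
      DifferentiableAt ℝ (fun p : ℝ × ℝ => w₂ p.1 p.2) (v, m) ∧
      (-v + Real.sqrt (m ^ 2 + v ^ 2)) * deriv (fun x : ℝ => w₂ x m) v +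
          m * deriv (fun y : ℝ => w₂ v y) m = 0 ∧
      deriv (fun x : ℝ => w₂ x m) v * (-v + Real.sqrt (v ^ 2 + m ^ 2)) +
          deriv (fun y : ℝ => w₂ v y) m * m = 0 := by
  intro w₂ v m hm
  have hs : 0 < m ^ 2 + v ^ 2 := by positivity
  have hr : Real.sqrt (m ^ 2 + v ^ 2) ^ 2 = m ^ 2 + v ^ 2 := Real.sq_sqrt hs.le
  have hrpos : 0 < Real.sqrt (m ^ 2 + v ^ 2) := Real.sqrt_pos.mpr hs
  have hcs : Real.sqrt ((m ^ 2 + v ^ 2) ^ 3)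
      = (m ^ 2 + v ^ 2) * Real.sqrt (m ^ 2 + v ^ 2) := by
    rw [show (m ^ 2 + v ^ 2) ^ 3 = (m ^ 2 + v ^ 2) ^ 2 * (m ^ 2 + v ^ 2) by ring,
      Real.sqrt_mul (by positivity), Real.sqrt_sq hs.le]
  -- derivative in v
  have hv : HasDerivAt (fun x : ℝ => w₂ x m)
      (3 * (m ^ 2 + v ^ 2) ^ 2 * (2 * v) / (2 * Real.sqrt ((m ^ 2 + v ^ 2) ^ 3))
        + 3 * v ^ 2 - 3 * m ^ 2) v := by
    have h2x : HasDerivAt (fun x : ℝ => m ^ 2 + x ^ 2) (2 * v) v := by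
      simpa using (hasDerivAt_pow 2 v).const_add (m ^ 2)
    have h3 : HasDerivAt (fun x : ℝ => (m ^ 2 + x ^ 2) ^ 3)
        (3 * (m ^ 2 + v ^ 2) ^ 2 * (2 * v)) v := by
      simpa using h2x.fun_pow 3
    have hsq := h3.sqrt (by positivity)
    have hcube : HasDerivAt (fun x : ℝ => x ^ 3) (3 * v ^ 2) v := by
      simpa using hasDerivAt_pow 3 v
    have hlin : HasDerivAt (fun x : ℝ => 3 * x * m ^ 2) (3 * m ^ 2) v := by
      simpa using ((hasDerivAt_id v).const_mul 3).mul_const (m ^ 2)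
    have := (hsq.fun_add hcube).fun_sub hlin
    convert this using 1
  -- derivative in m
  have hmy : HasDerivAt (fun y : ℝ => w₂ v y)
      (3 * (m ^ 2 + v ^ 2) ^ 2 * (2 * m) / (2 * Real.sqrt ((m ^ 2 + v ^ 2) ^ 3))
        - 3 * v * (2 * m)) m := by
    have h2y : HasDerivAt (fun y : ℝ => y ^ 2 + v ^ 2) (2 * m) m := by
      simpa using (hasDerivAt_pow 2 m).add_const (v ^ 2)
    have h3 : HasDerivAt (fun y : ℝ => (y ^ 2 + v ^ 2) ^ 3)
        (3 * (m ^ 2 + v ^ 2) ^ 2 * (2 * m)) m := by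
      simpa using h2y.fun_pow 3
    have hsq := h3.sqrt (by positivity)
    have hlin : HasDerivAt (fun y : ℝ => 3 * v * y ^ 2) (3 * v * (2 * m)) m := by
      simpa [mul_comm, mul_assoc] using (hasDerivAt_pow 2 m).const_mul (3 * v)
    have := (hsq.add_const (v ^ 3)).fun_sub hlin
    convert this using 1
  have hdv : deriv (fun x : ℝ => w₂ x m) v
      = 3 * v * Real.sqrt (m ^ 2 + v ^ 2) + 3 * v ^ 2 - 3 * m ^ 2 := by
    rw [hv.deriv, hcs]
    field_simp
    linear_combination (-v)*hr
  have hdm : deriv (fun y : ℝ => w₂ v y) m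
      = 3 * m * Real.sqrt (m ^ 2 + v ^ 2) - 6 * v * m := by
    rw [hmy.deriv, hcs]
    field_simp
    linear_combination (-3)*hr
  refine ⟨?_, ?_, ?_⟩
  · have hpoly : DifferentiableAt ℝ (fun p : ℝ × ℝ => (p.2 ^ 2 + p.1 ^ 2) ^ 3) (v, m) := by
      fun_prop
    have h1 := hpoly.sqrt (by positivity)
    have h2 : DifferentiableAt ℝ (fun p : ℝ × ℝ => p.1 ^ 3 - 3 * p.1 * p.2 ^ 2) (v, m) := by
      fun_prop
    show DifferentiableAt ℝ
      (fun p : ℝ × ℝ => Real.sqrt ((p.2 ^ 2 + p.1 ^ 2) ^ 3) + p.1 ^ 3 - 3 * p.1 * p.2 ^ 2) (v, m)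
    simpa [add_sub_assoc] using h1.fun_add h2
  · rw [hdv, hdm]; linear_combination 3*v*hr
  · rw [hdv, hdm, show v ^ 2 + m ^ 2 = m ^ 2 + v ^ 2 by ring]; linear_combination 3*v*hr
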